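/- For any n×n real positive definite matrix Θ, the n²×n² matrices ∫₀¹ [t(Θ−I)+I]⁻¹ ⊗ [t(Θ−I)+I]⁻¹ dt and ∫₀¹ e^{t log Θ} ⊗ e^{(1−t) log Θ} dt are inverses of each other. -/

import Mathlib

open Matrix Kronecker

lemma aux_pos {t a : ℝ} (ht0 : 0 ≤ t) (ht1 : t ≤ 1) (ha : -1 < a) : 0 < t * a + 1 := by
  rcases le_or_gt 0 a with h | h
  · nlinarith
  · nlinarith

lemma aux_intable {a b : ℝ} (ha : -1 < a) (hb : -1 < b) :
    IntervalIntegrable (fun t : ℝ => (t * a + 1)⁻¹ * (t * b + 1)⁻¹)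
      MeasureTheory.volume 0 1 := by
  apply ContinuousOn.intervalIntegrable
  rw [Set.uIcc_of_le (by norm_num : (0:ℝ) ≤ 1)]
  refine ContinuousOn.mul ?_ ?_ <;>
    exact ContinuousOn.inv₀ (by fun_prop)
      (fun t ht => (aux_pos ht.1 ht.2 (by assumption)).ne')

lemma integral_exp_part (μ ν : ℝ) :
    ∫ t in (0:ℝ)..1, Real.exp (t * μ) * Real.exp ((1 - t) * ν) =
      if μ = ν then Real.exp μ else (Real.exp μ - Real.exp ν) / (μ - ν) := by
  have hrw : ∀ t : ℝ, Real.exp (t * μ) * Real.exp ((1 - t) * ν)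
      = Real.exp (t * μ + (1 - t) * ν) := fun t => (Real.exp_add _ _).symm
  by_cases h : μ = ν
  · subst h
    simp only [hrw, if_pos rfl]
    have : ∀ t : ℝ, t * μ + (1 - t) * μ = μ := fun t => by ring
    simp [this]
  · rw [if_neg h]
    have hd : ∀ t ∈ Set.uIcc (0:ℝ) 1,
        HasDerivAt (fun s : ℝ => Real.exp (s * μ + (1 - s) * ν) / (μ - ν))
          (Real.exp (t * μ) * Real.exp ((1 - t) * ν)) t := by
      intro t _
      have h1 : HasDerivAt (fun s : ℝ => s * μ + (1 - s) * ν) (μ - ν) t := by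
        have := (((hasDerivAt_id t).mul_const μ).add
          (((hasDerivAt_const t (1:ℝ)).sub (hasDerivAt_id t)).mul_const ν))
        exact this.congr_deriv (by ring)
      have h2 := (h1.exp).div_const (μ - ν)
      have hμν : μ - ν ≠ 0 := sub_ne_zero.mpr h
      rw [hrw t]
      refine h2.congr_deriv ?_
      field_simp
    have hint : IntervalIntegrable
        (fun t : ℝ => Real.exp (t * μ) * Real.exp ((1 - t) * ν))
        MeasureTheory.volume 0 1 := by
      apply Continuous.intervalIntegrable; fun_prop
    rw [intervalIntegral.integral_eq_sub_of_hasDerivAt hd hint]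
    simp
    ring

lemma integral_inv_part (μ ν : ℝ) :
    ∫ t in (0:ℝ)..1, (t * (Real.exp μ - 1) + 1)⁻¹ * (t * (Real.exp ν - 1) + 1)⁻¹ =
      if μ = ν then Real.exp (-μ) else (μ - ν) / (Real.exp μ - Real.exp ν) := by
  set a := Real.exp μ - 1 with ha_def
  set b := Real.exp ν - 1 with hb_def
  have ha : -1 < a := by have := Real.exp_pos μ; simp [ha_def]; linarith
  have hb : -1 < b := by have := Real.exp_pos ν; simp [hb_def]; linarith
  have ha1 : a + 1 = Real.exp μ := by simp [ha_def]
  have hb1 : b + 1 = Real.exp ν := by simp [hb_def]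
  by_cases h : μ = ν
  · subst h
    rw [if_pos rfl]
    rw [show b = a from rfl]
    by_cases h0 : a = 0
    · simp only [h0, mul_zero, zero_add, inv_one, one_mul]
      rw [intervalIntegral.integral_const]
      have : Real.exp μ = 1 := by linarith [ha1]
      simp [Real.exp_neg, this]
    · have hd : ∀ t ∈ Set.uIcc (0:ℝ) 1,
          HasDerivAt (fun s : ℝ => -(a * (s * a + 1))⁻¹)
            ((t * a + 1)⁻¹ * (t * a + 1)⁻¹) t := by
        intro t ht
        rw [Set.uIcc_of_le (by norm_num : (0:ℝ) ≤ 1)] at ht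
        have hpos := aux_pos ht.1 ht.2 ha
        have hne : a * (t * a + 1) ≠ 0 := mul_ne_zero h0 hpos.ne'
        have h1 : HasDerivAt (fun s : ℝ => a * (s * a + 1)) (a * a) t := by
          have := (((hasDerivAt_id t).mul_const a).add_const 1).const_mul a
          simpa using this.congr_deriv (by ring)
        have h2 := (h1.inv hne).neg
        refine h2.congr_deriv ?_
        field_simp
      rw [intervalIntegral.integral_eq_sub_of_hasDerivAt hd (aux_intable ha ha)]
      rw [Real.exp_neg, ← ha1]
      have hpos1 : a + 1 > 0 := by linarith
      field_simp
      ring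
  · rw [if_neg h]
    have hab : a ≠ b := by
      intro hh
      apply h
      have : Real.exp μ = Real.exp ν := by
        rw [← ha1, ← hb1, hh]
      exact Real.exp_injective this
    have hd : ∀ t ∈ Set.uIcc (0:ℝ) 1,
        HasDerivAt (fun s : ℝ => (Real.log (s * a + 1) - Real.log (s * b + 1)) / (a - b))
          ((t * a + 1)⁻¹ * (t * b + 1)⁻¹) t := by
      intro t ht
      rw [Set.uIcc_of_le (by norm_num : (0:ℝ) ≤ 1)] at ht
      have hpa := aux_pos ht.1 ht.2 ha
      have hpb := aux_pos ht.1 ht.2 hb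
      have h1 : HasDerivAt (fun s : ℝ => s * a + 1) a t := by
        simpa using ((hasDerivAt_id t).mul_const a).add_const 1
      have h2 : HasDerivAt (fun s : ℝ => s * b + 1) b t := by
        simpa using ((hasDerivAt_id t).mul_const b).add_const 1
      have h3 := ((h1.log hpa.ne').sub (h2.log hpb.ne')).div_const (a - b)
      refine h3.congr_deriv ?_
      have hub : a - b ≠ 0 := sub_ne_zero.mpr hab
      rw [div_sub_div _ _ hpa.ne' hpb.ne', div_div, ← mul_inv, div_eq_iff (mul_ne_zero (mul_ne_zero hpa.ne' hpb.ne') hub), inv_mul_eq_div, eq_div_iff (mul_ne_zero hpa.ne' hpb.ne')]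
      ring
    rw [intervalIntegral.integral_eq_sub_of_hasDerivAt hd (aux_intable ha hb)]
    have hla : Real.log (a + 1) = μ := by rw [ha1, Real.log_exp]
    have hlb : Real.log (b + 1) = ν := by rw [hb1, Real.log_exp]
    have : Real.exp μ - Real.exp ν = a - b := by rw [← ha1, ← hb1]; ring
    simp only [one_mul, zero_mul, zero_add, Real.log_one, hla, hlb, this]
    ring

lemma scalar_key (μ ν : ℝ) :
    (∫ t in (0:ℝ)..1, (t * (Real.exp μ - 1) + 1)⁻¹ * (t * (Real.exp ν - 1) + 1)⁻¹) *
      (∫ t in (0:ℝ)..1, Real.exp (t * μ) * Real.exp ((1 - t) * ν)) = 1 := by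
  rw [integral_inv_part, integral_exp_part]
  by_cases h : μ = ν
  · simp [h, ← Real.exp_add]
  · rw [if_neg h, if_neg h]
    have h1 : μ - ν ≠ 0 := sub_ne_zero.mpr h
    have h2 : Real.exp μ - Real.exp ν ≠ 0 :=
      sub_ne_zero.mpr (fun hh => h (Real.exp_injective hh))
    field_simp

/-- Entrywise interval integral of a conjugated diagonal family. -/
lemma matrix_integral_conj_diag {n : ℕ}
    (V W : Matrix (Fin n × Fin n) (Fin n × Fin n) ℝ)
    (f : ℝ → Matrix (Fin n × Fin n) (Fin n × Fin n) ℝ)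
    (c : ℝ → (Fin n × Fin n) → ℝ)
    (hc : ∀ r, IntervalIntegrable (fun t => c t r) MeasureTheory.volume 0 1)
    (hf : ∀ t ∈ Set.Icc (0:ℝ) 1, f t = V * Matrix.diagonal (c t) * W) :
    (Matrix.of fun p q => ∫ t in (0:ℝ)..1, f t p q)
      = V * Matrix.diagonal (fun r => ∫ t in (0:ℝ)..1, c t r) * W := by
  ext p q
  simp only [Matrix.of_apply]
  have hcongr : ∀ t ∈ Set.uIcc (0:ℝ) 1,
      f t p q = ∑ r, V p r * W r q * c t r := by
    intro t ht
    rw [Set.uIcc_of_le (by norm_num : (0:ℝ) ≤ 1)] at ht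
    rw [hf t ht, Matrix.mul_apply]
    congr 1
    ext r
    rw [Matrix.mul_diagonal]
    ring
  rw [intervalIntegral.integral_congr hcongr,
    intervalIntegral.integral_finset_sum (fun r _ => (hc r).const_mul _)]
  rw [Matrix.mul_apply]
  congr 1
  ext r
  rw [Matrix.mul_diagonal, intervalIntegral.integral_const_mul]
  ring

/-- For an `n×n` real positive definite matrix `Θ` with principal logarithm `L`
(the symmetric matrix with `e^L = Θ`), the `n²×n²` matrices
`∫₀¹ [t(Θ−I)+I]⁻¹ ⊗ [t(Θ−I)+I]⁻¹ dt` and `∫₀¹ e^{tL} ⊗ e^{(1−t)L} dt`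
(integrals taken entrywise) are two-sided inverses of each other. -/
theorem frechet_log_exp_inverse {n : ℕ}
    (Θ L : Matrix (Fin n) (Fin n) ℝ) (hΘ : Θ.PosDef)
    (hLs : L.IsSymm) (hL : NormedSpace.exp L = Θ) :
    let M₁ : Matrix (Fin n × Fin n) (Fin n × Fin n) ℝ :=
      Matrix.of fun p q =>
        ∫ t in (0 : ℝ)..1,
          ((t • (Θ - 1) + 1)⁻¹ ⊗ₖ (t • (Θ - 1) + 1)⁻¹) p q
    let M₂ : Matrix (Fin n × Fin n) (Fin n × Fin n) ℝ :=
      Matrix.of fun p q =>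
        ∫ t in (0 : ℝ)..1,
          ((NormedSpace.exp (t • L)) ⊗ₖ (NormedSpace.exp ((1 - t) • L))) p q
    M₁ * M₂ = 1 ∧ M₂ * M₁ = 1 := by
  intro M₁ M₂
  classical
  -- spectral decomposition of L
  have hLH : L.IsHermitian := by
    rwa [Matrix.IsHermitian, Matrix.conjTranspose_eq_transpose_of_trivial]
  set U : Matrix (Fin n) (Fin n) ℝ := (hLH.eigenvectorUnitary : Matrix (Fin n) (Fin n) ℝ)
    with hU_def
  set d : Fin n → ℝ := hLH.eigenvalues with hd_def
  have hstar : star U = Uᵀ := by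
    rw [Matrix.star_eq_conjTranspose, Matrix.conjTranspose_eq_transpose_of_trivial]
  have hU2 : Uᵀ * U = 1 := by
    rw [← hstar]; exact hLH.eigenvectorUnitary.prop.1
  have hU1 : U * Uᵀ = 1 := by
    rw [← hstar]; exact hLH.eigenvectorUnitary.prop.2
  have hspec : L = U * Matrix.diagonal d * Uᵀ := by
    have := hLH.spectral_theorem
    rw [← hstar]
    simpa [RCLike.ofReal_real_eq_id] using this
  have hUunit : IsUnit U := ⟨⟨U, Uᵀ, hU1, hU2⟩, rfl⟩
  have hUinv : U⁻¹ = Uᵀ := Matrix.inv_eq_left_inv hU2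
  -- conjugation helpers
  have hmulc : ∀ v w : Fin n → ℝ,
      (U * Matrix.diagonal v * Uᵀ) * (U * Matrix.diagonal w * Uᵀ)
        = U * Matrix.diagonal (fun i => v i * w i) * Uᵀ := by
    intro v w
    have : Matrix.diagonal v * Matrix.diagonal w = Matrix.diagonal (fun i => v i * w i) :=
      Matrix.diagonal_mul_diagonal v w
    calc (U * Matrix.diagonal v * Uᵀ) * (U * Matrix.diagonal w * Uᵀ)
        = U * Matrix.diagonal v * (Uᵀ * U) * Matrix.diagonal w * Uᵀ := by
          simp only [Matrix.mul_assoc]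
      _ = U * (Matrix.diagonal v * Matrix.diagonal w) * Uᵀ := by
          rw [hU2]; simp only [Matrix.mul_one, Matrix.mul_assoc]
      _ = U * Matrix.diagonal (fun i => v i * w i) * Uᵀ := by rw [this]
  have hexp : ∀ v : Fin n → ℝ,
      NormedSpace.exp (U * Matrix.diagonal v * Uᵀ)
        = U * Matrix.diagonal (fun i => Real.exp (v i)) * Uᵀ := by
    intro v
    rw [← hUinv, Matrix.exp_conj U _ hUunit, Matrix.exp_diagonal, Pi.exp_def]
    simp [Real.exp_eq_exp_ℝ]
  have hΘeq : Θ = U * Matrix.diagonal (fun i => Real.exp (d i)) * Uᵀ := by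
    rw [← hL, hspec, hexp]
  -- smul of conjugated diagonal
  have hsmul : ∀ (s : ℝ) (v : Fin n → ℝ),
      s • (U * Matrix.diagonal v * Uᵀ) = U * Matrix.diagonal (fun i => s * v i) * Uᵀ := by
    intro s v
    have hd : Matrix.diagonal (fun i => s * v i) = s • Matrix.diagonal v := by
      rw [← Matrix.diagonal_smul]; rfl
    rw [hd, Matrix.mul_smul, Matrix.smul_mul]
  -- exp of t • L and (1-t) • L
  have hexpL : ∀ s : ℝ, NormedSpace.exp (s • L)
      = U * Matrix.diagonal (fun i => Real.exp (s * d i)) * Uᵀ := by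
    intro s
    rw [hspec, hsmul, hexp]
  -- the affine family and its inverse
  have haff : ∀ t : ℝ, t • (Θ - 1) + 1
      = U * Matrix.diagonal (fun i => t * (Real.exp (d i) - 1) + 1) * Uᵀ := by
    intro t
    have h1 : (1 : Matrix (Fin n) (Fin n) ℝ) = U * Matrix.diagonal (fun _ => (1:ℝ)) * Uᵀ := by
      rw [Matrix.diagonal_one, Matrix.mul_one, hU1]
    calc t • (Θ - 1) + 1
        = t • (U * Matrix.diagonal (fun i => Real.exp (d i)) * Uᵀ
            - U * Matrix.diagonal (fun _ => (1:ℝ)) * Uᵀ)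
            + U * Matrix.diagonal (fun _ => (1:ℝ)) * Uᵀ := by rw [← h1, ← hΘeq]
      _ = t • (U * Matrix.diagonal (fun i => Real.exp (d i) - 1) * Uᵀ)
            + U * Matrix.diagonal (fun _ => (1:ℝ)) * Uᵀ := by
          rw [← Matrix.sub_mul, ← Matrix.mul_sub, Matrix.diagonal_sub]
      _ = U * Matrix.diagonal (fun i => t * (Real.exp (d i) - 1)) * Uᵀ
            + U * Matrix.diagonal (fun _ => (1:ℝ)) * Uᵀ := by rw [hsmul]
      _ = U * (Matrix.diagonal (fun i => t * (Real.exp (d i) - 1))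
            + Matrix.diagonal (fun _ => (1:ℝ))) * Uᵀ := by
          rw [Matrix.mul_add, Matrix.add_mul]
      _ = U * Matrix.diagonal (fun i => t * (Real.exp (d i) - 1) + 1) * Uᵀ := by
          rw [Matrix.diagonal_add]
  have hexp_gt : ∀ i, -1 < Real.exp (d i) - 1 := fun i => by
    have := Real.exp_pos (d i); linarith
  have hinv : ∀ t ∈ Set.Icc (0:ℝ) 1, (t • (Θ - 1) + 1)⁻¹
      = U * Matrix.diagonal (fun i => (t * (Real.exp (d i) - 1) + 1)⁻¹) * Uᵀ := by
    intro t ht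
    rw [haff t]
    apply Matrix.inv_eq_right_inv
    rw [hmulc]
    have : (fun i => (t * (Real.exp (d i) - 1) + 1) * (t * (Real.exp (d i) - 1) + 1)⁻¹)
        = fun _ => (1:ℝ) := by
      funext i
      exact mul_inv_cancel₀ (aux_pos ht.1 ht.2 (hexp_gt i)).ne'
    rw [this, Matrix.diagonal_one, Matrix.mul_one, hU1]
  -- Kronecker setup
  set V : Matrix (Fin n × Fin n) (Fin n × Fin n) ℝ := U ⊗ₖ U with hV_def
  set W : Matrix (Fin n × Fin n) (Fin n × Fin n) ℝ := Uᵀ ⊗ₖ Uᵀ with hW_def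
  have hVW : V * W = 1 := by
    rw [hV_def, hW_def, ← Matrix.mul_kronecker_mul, hU1, Matrix.one_kronecker_one]
  have hWV : W * V = 1 := by
    rw [hV_def, hW_def, ← Matrix.mul_kronecker_mul, hU2, Matrix.one_kronecker_one]
  have hkron : ∀ v w : Fin n → ℝ,
      (U * Matrix.diagonal v * Uᵀ) ⊗ₖ (U * Matrix.diagonal w * Uᵀ)
        = V * Matrix.diagonal (fun r : Fin n × Fin n => v r.1 * w r.2) * W := by
    intro v w
    rw [Matrix.mul_kronecker_mul, Matrix.mul_kronecker_mul,
      Matrix.diagonal_kronecker_diagonal, hV_def, hW_def]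
  -- diagonalize M₁ and M₂
  have hM1 : M₁ = V * Matrix.diagonal (fun r : Fin n × Fin n =>
      ∫ t in (0:ℝ)..1, (t * (Real.exp (d r.1) - 1) + 1)⁻¹
        * (t * (Real.exp (d r.2) - 1) + 1)⁻¹) * W := by
    apply matrix_integral_conj_diag
    · intro r
      exact aux_intable (hexp_gt r.1) (hexp_gt r.2)
    · intro t ht
      rw [hinv t ht, hkron]
  have hM2 : M₂ = V * Matrix.diagonal (fun r : Fin n × Fin n =>
      ∫ t in (0:ℝ)..1, Real.exp (t * d r.1) * Real.exp ((1 - t) * d r.2)) * W := by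
    apply matrix_integral_conj_diag
    · intro r
      apply Continuous.intervalIntegrable; fun_prop
    · intro t _
      rw [hexpL t, hexpL (1 - t), hkron]
  -- finish
  set F : Fin n × Fin n → ℝ := fun r =>
    ∫ t in (0:ℝ)..1, (t * (Real.exp (d r.1) - 1) + 1)⁻¹
      * (t * (Real.exp (d r.2) - 1) + 1)⁻¹ with hF_def
  set G : Fin n × Fin n → ℝ := fun r =>
    ∫ t in (0:ℝ)..1, Real.exp (t * d r.1) * Real.exp ((1 - t) * d r.2) with hG_def
  have hFG : ∀ r, F r * G r = 1 := fun r => scalar_key (d r.1) (d r.2)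
  have hmulc' : ∀ v w : Fin n × Fin n → ℝ,
      (V * Matrix.diagonal v * W) * (V * Matrix.diagonal w * W)
        = V * Matrix.diagonal (fun i => v i * w i) * W := by
    intro v w
    calc (V * Matrix.diagonal v * W) * (V * Matrix.diagonal w * W)
        = V * Matrix.diagonal v * (W * V) * Matrix.diagonal w * W := by
          simp only [Matrix.mul_assoc]
      _ = V * (Matrix.diagonal v * Matrix.diagonal w) * W := by
          rw [hWV]; simp only [Matrix.mul_one, Matrix.mul_assoc]
      _ = V * Matrix.diagonal (fun i => v i * w i) * W := by
          rw [Matrix.diagonal_mul_diagonal]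
  constructor
  · rw [hM1, hM2, hmulc']
    have : (fun i => F i * G i) = fun _ => (1:ℝ) := funext hFG
    rw [this, Matrix.diagonal_one, Matrix.mul_one, hVW]
  · rw [hM1, hM2, hmulc']
    have : (fun i => G i * F i) = fun _ => (1:ℝ) := funext fun i => by
      rw [mul_comm]; exact hFG i
    rw [this, Matrix.diagonal_one, Matrix.mul_one, hVW]
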